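/- Let g : [0,1] → ℝ be continuously differentiable with derivative g′. Then for every n ≥ 1, sup_{x∈[0,1]} |B_n(g;x) − g(x)| ≤ (1/√n) ω_{g′}(1/(2√n)), where ω_{g′} is the modulus of continuity of g′. -/

import Mathlib

noncomputable def bern (n k : ℕ) (x : ℝ) : ℝ :=
  (n.choose k : ℝ) * x ^ k * (1 - x) ^ (n - k)

noncomputable def bernOp (n : ℕ) (f : ℝ → ℝ) (x : ℝ) : ℝ :=
  ∑ k ∈ Finset.range (n + 1), f ((k : ℝ) / (n : ℝ)) * bern n k x

noncomputable def modCont (f : ℝ → ℝ) (δ : ℝ) : ℝ :=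
  sSup {r : ℝ | ∃ x ∈ Set.Icc (0 : ℝ) 1, ∃ y ∈ Set.Icc (0 : ℝ) 1, |x - y| ≤ δ ∧ r = |f x - f y|}

open Finset Polynomial

lemma bern_eq (n k : ℕ) (x : ℝ) : bern n k x = (bernsteinPolynomial ℝ n k).eval x := by
  simp [bern, bernsteinPolynomial]

lemma bern_nonneg {n k : ℕ} {x : ℝ} (hx : x ∈ Set.Icc (0:ℝ) 1) : 0 ≤ bern n k x := by
  have h1 : (0:ℝ) ≤ 1 - x := by linarith [hx.2]
  exact mul_nonneg (mul_nonneg (Nat.cast_nonneg _) (pow_nonneg hx.1 _)) (pow_nonneg h1 _)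

lemma bern_sum (n : ℕ) (x : ℝ) : ∑ k ∈ range (n+1), bern n k x = 1 := by
  have h := bernsteinPolynomial.sum ℝ n
  have := congrArg (Polynomial.eval x) h
  simpa [Polynomial.eval_finset_sum, bern_eq] using this

lemma bern_sum_smul (n : ℕ) (x : ℝ) :
    ∑ k ∈ range (n+1), (k:ℝ) * bern n k x = n * x := by
  have h := bernsteinPolynomial.sum_smul ℝ n
  have := congrArg (Polynomial.eval x) h
  simpa [Polynomial.eval_finset_sum, bern_eq] using this

lemma bern_variance (n : ℕ) (x : ℝ) :
    ∑ k ∈ range (n+1), ((n:ℝ) * x - k)^2 * bern n k x = n * x * (1 - x) := by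
  have h := bernsteinPolynomial.variance ℝ n
  have := congrArg (Polynomial.eval x) h
  simpa [Polynomial.eval_finset_sum, bern_eq] using this

lemma modCont_bddAbove (g' : ℝ → ℝ) (hg' : ContinuousOn g' (Set.Icc (0:ℝ) 1)) (δ : ℝ) :
    BddAbove {r : ℝ | ∃ x ∈ Set.Icc (0:ℝ) 1, ∃ y ∈ Set.Icc (0:ℝ) 1, |x - y| ≤ δ ∧ r = |g' x - g' y|} := by
  obtain ⟨C, hC⟩ := isCompact_Icc.exists_bound_of_continuousOn hg'
  simp only [Real.norm_eq_abs] at hC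
  refine ⟨2*C, ?_⟩
  rintro r ⟨x, hx, y, hy, -, rfl⟩
  have h1 := hC x hx
  have h2 := hC y hy
  have h3 : |g' x - g' y| ≤ |g' x| + |g' y| := abs_sub _ _
  linarith

lemma modCont_le (g' : ℝ → ℝ) (hg' : ContinuousOn g' (Set.Icc (0:ℝ) 1)) {δ u v : ℝ}
    (hu : u ∈ Set.Icc (0:ℝ) 1) (hv : v ∈ Set.Icc (0:ℝ) 1) (h : |u - v| ≤ δ) :
    |g' u - g' v| ≤ modCont g' δ :=
  le_csSup (modCont_bddAbove g' hg' δ) ⟨u, hu, v, hv, h, rfl⟩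

lemma modCont_nonneg (g' : ℝ → ℝ) (hg' : ContinuousOn g' (Set.Icc (0:ℝ) 1)) {δ : ℝ}
    (hδ : 0 ≤ δ) : 0 ≤ modCont g' δ := by
  have := modCont_le g' hg' (δ := δ) (u := 0) (v := 0) (by norm_num) (by norm_num) (by simpa using hδ)
  simpa using this

lemma modCont_step (g' : ℝ → ℝ) (hg' : ContinuousOn g' (Set.Icc (0:ℝ) 1)) {δ : ℝ} (hδ : 0 < δ) :
    ∀ N : ℕ, ∀ u v : ℝ, u ∈ Set.Icc (0:ℝ) 1 → v ∈ Set.Icc (0:ℝ) 1 → u ≤ v →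
      v - u ≤ N * δ → |g' v - g' u| ≤ N * modCont g' δ := by
  intro N
  induction N with
  | zero =>
    intro u v hu hv huv h
    have : v = u := le_antisymm (by simpa using h) huv
    simp [this]
  | succ N ih =>
    intro u v hu hv huv h
    have hω0 : 0 ≤ modCont g' δ := modCont_nonneg g' hg' hδ.le
    by_cases hc : v - u ≤ δ
    · have h1 : |g' v - g' u| ≤ modCont g' δ :=
        modCont_le g' hg' hv hu (by rw [abs_of_nonneg (by linarith)]; exact hc)
      push_cast
      nlinarith
    · push_neg at hc
      set w := v - δ with hw'
      have hw : w ∈ Set.Icc (0:ℝ) 1 := ⟨by have := hu.1; simp only [hw']; linarith,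
        by have := hv.2; simp only [hw']; linarith⟩
      have h1 : |g' v - g' w| ≤ modCont g' δ :=
        modCont_le g' hg' hv hw (by simp [hw', abs_of_nonneg hδ.le])
      have h2 : |g' w - g' u| ≤ N * modCont g' δ := by
        refine ih u w hu hw (by simp only [hw']; linarith) ?_
        push_cast at h ⊢
        simp only [hw']; linarith
      have h3 : |g' v - g' u| ≤ |g' v - g' w| + |g' w - g' u| := abs_sub_le _ _ _
      push_cast
      linarith

lemma modCont_pointwise_le (g' : ℝ → ℝ) (hg' : ContinuousOn g' (Set.Icc (0:ℝ) 1)) {δ : ℝ}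
    (hδ : 0 < δ) {u v : ℝ} (hu : u ∈ Set.Icc (0:ℝ) 1) (hv : v ∈ Set.Icc (0:ℝ) 1) :
    |g' u - g' v| ≤ (1 + |u - v|/δ) * modCont g' δ := by
  have hω0 : 0 ≤ modCont g' δ := modCont_nonneg g' hg' hδ.le
  -- reduce to the case v ≤ u
  have main : ∀ a b : ℝ, a ∈ Set.Icc (0:ℝ) 1 → b ∈ Set.Icc (0:ℝ) 1 → b ≤ a →
      |g' a - g' b| ≤ (1 + |a - b|/δ) * modCont g' δ := by
    intro a b ha hb hba
    set d : ℝ := a - b with hd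
    have hd0 : 0 ≤ d := by linarith
    set N : ℕ := ⌈d/δ⌉₊ with hN
    have h1 : d ≤ N * δ := by
      have := Nat.le_ceil (d/δ)
      rw [← hN] at this
      calc d = (d/δ) * δ := by field_simp
      _ ≤ N * δ := by nlinarith
    have h2 : (N:ℝ) ≤ 1 + d/δ := by
      have := Nat.ceil_lt_add_one (by positivity : (0:ℝ) ≤ d/δ)
      rw [← hN] at this
      linarith
    have h3 := modCont_step g' hg' hδ N b a hb ha hba (by linarith)
    have h4 : |a - b| = d := abs_of_nonneg hd0
    rw [h4]
    nlinarith
  rcases le_total v u with h | h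
  · exact main u v hu hv h
  · have := main v u hv hu h
    rw [abs_sub_comm u v, abs_sub_comm (g' u) (g' v)]
    exact this

set_option maxHeartbeats 2000000 in
theorem stmt12 (g g' : ℝ → ℝ)
    (hderiv : ∀ x ∈ Set.Icc (0 : ℝ) 1, HasDerivWithinAt g (g' x) (Set.Icc (0 : ℝ) 1) x)
    (hg' : ContinuousOn g' (Set.Icc (0 : ℝ) 1))
    (n : ℕ) (hn : 1 ≤ n) :
    (⨆ x : Set.Icc (0 : ℝ) 1, |bernOp n g x - g x|)
      ≤ (1 / Real.sqrt n) * modCont g' (1 / (2 * Real.sqrt n)) := by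
  have hnR : (0:ℝ) < n := by exact_mod_cast hn
  have hsq : (0:ℝ) < Real.sqrt n := Real.sqrt_pos.2 hnR
  set δ : ℝ := 1 / (2 * Real.sqrt n) with hδdef
  have hδ : 0 < δ := by rw [hδdef]; positivity
  have hδ2 : δ^2 = 1 / (4 * n) := by
    rw [hδdef, div_pow, mul_pow, Real.sq_sqrt hnR.le]
    norm_num
  set ω := modCont g' δ with hωdef
  have hω0 : 0 ≤ ω := modCont_nonneg g' hg' hδ.le
  have hcont : ContinuousOn g (Set.Icc (0:ℝ) 1) := fun t ht => (hderiv t ht).continuousWithinAt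
  have h2δ : 1/Real.sqrt n = 2*δ := by rw [hδdef]; field_simp
  clear_value δ ω
  haveI : Nonempty (Set.Icc (0:ℝ) 1) := ⟨⟨0, by norm_num⟩⟩
  apply ciSup_le
  rintro ⟨x, hx⟩
  show |bernOp n g x - g x| ≤ 1 / Real.sqrt n * ω
  -- moments
  have h0 := bern_sum n x
  have h1 : ∑ k ∈ Finset.range (n+1), ((k:ℝ)/(n:ℝ) - x) * bern n k x = 0 := by
    have hc : ∀ k ∈ Finset.range (n+1), ((k:ℝ)/(n:ℝ) - x) * bern n k x
        = ((k:ℝ) * bern n k x)/n - x * bern n k x := by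
      intro k _; field_simp
    rw [Finset.sum_congr rfl hc, Finset.sum_sub_distrib, ← Finset.sum_div, ← Finset.mul_sum,
      bern_sum_smul, h0]
    field_simp; ring
  have h2 : ∑ k ∈ Finset.range (n+1), ((k:ℝ)/(n:ℝ) - x)^2 * bern n k x = x*(1-x)/n := by
    have hc : ∀ k ∈ Finset.range (n+1), ((k:ℝ)/(n:ℝ) - x)^2 * bern n k x
        = (((n:ℝ)*x - k)^2 * bern n k x)/n^2 := by
      intro k _
      have hsq2 : ((k:ℝ)/(n:ℝ) - x)^2 = ((n:ℝ)*x - k)^2/n^2 := by field_simp; ring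
      rw [hsq2]; ring
    rw [Finset.sum_congr rfl hc, ← Finset.sum_div, bern_variance]
    field_simp
  -- rewrite the error as a single sum
  have key : bernOp n g x - g x
      = ∑ k ∈ Finset.range (n+1),
          (g ((k:ℝ)/(n:ℝ)) - g x - g' x * ((k:ℝ)/(n:ℝ) - x)) * bern n k x := by
    have expand : ∑ k ∈ Finset.range (n+1),
          (g ((k:ℝ)/(n:ℝ)) - g x - g' x * ((k:ℝ)/(n:ℝ) - x)) * bern n k x
        = (∑ k ∈ Finset.range (n+1), g ((k:ℝ)/(n:ℝ)) * bern n k x)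
          - g x * ∑ k ∈ Finset.range (n+1), bern n k x
          - g' x * ∑ k ∈ Finset.range (n+1), ((k:ℝ)/(n:ℝ) - x) * bern n k x := by
      rw [Finset.mul_sum, Finset.mul_sum, ← Finset.sum_sub_distrib, ← Finset.sum_sub_distrib]
      refine Finset.sum_congr rfl fun k _ => by ring
    rw [expand, h0, h1, bernOp]
    ring
  -- per-term bound
  have term_bound : ∀ k ∈ Finset.range (n+1),
      |g ((k:ℝ)/(n:ℝ)) - g x - g' x * ((k:ℝ)/(n:ℝ) - x)|
        ≤ ω * (δ/2) + (3*ω/(2*δ)) * ((k:ℝ)/(n:ℝ) - x)^2 := by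
    intro k hk
    set y : ℝ := (k:ℝ)/(n:ℝ) with hy
    have hkn : (k:ℝ) ≤ n := by
      exact_mod_cast Nat.lt_succ_iff.mp (Finset.mem_range.mp hk)
    have hyI : y ∈ Set.Icc (0:ℝ) 1 := ⟨by rw [hy]; positivity, by rw [hy, div_le_one hnR]; exact hkn⟩
    set a : ℝ := y - x with ha
    clear_value y a
    have h3w : 0 ≤ 3*ω/(2*δ) := by
      apply div_nonneg (by linarith) (by linarith)
    rcases eq_or_ne y x with heq | hne
    · have ha0 : a = 0 := by rw [ha, heq]; ring
      rw [heq, ha0]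
      simp only [sub_self, mul_zero, sub_zero, abs_zero, ne_eq, pow_two, zero_mul]
      nlinarith
    · -- mean value theorem
      have hmvt : ∃ c ∈ Set.Icc (0:ℝ) 1, |c - x| ≤ |a| ∧ g y - g x = g' c * a := by
        rcases hne.lt_or_gt with hlt | hlt
        · -- y < x
          obtain ⟨c, hc, hs⟩ := exists_hasDerivAt_eq_slope g g' hlt
            (hcont.mono (Set.Icc_subset_Icc hyI.1 hx.2))
            (fun t ht => (hderiv t ⟨le_of_lt (lt_of_le_of_lt hyI.1 ht.1),
                le_of_lt (lt_of_lt_of_le ht.2 hx.2)⟩).hasDerivAt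
              (Icc_mem_nhds (lt_of_le_of_lt hyI.1 ht.1) (lt_of_lt_of_le ht.2 hx.2)))
          have hc1 := hc.1
          have hc2 := hc.2
          refine ⟨c, ⟨le_trans hyI.1 hc1.le, le_trans hc2.le hx.2⟩, ?_, ?_⟩
          · have h4 : |a| = x - y := by
              rw [ha, abs_of_nonpos (by linarith)]; ring
            rw [h4, abs_le]
            constructor <;> linarith
          · have hne' : x - y ≠ 0 := by intro h; apply hne; linarith
            rw [eq_div_iff hne'] at hs
            rw [ha]
            linear_combination hs
        · -- x < y
          obtain ⟨c, hc, hs⟩ := exists_hasDerivAt_eq_slope g g' hlt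
            (hcont.mono (Set.Icc_subset_Icc hx.1 hyI.2))
            (fun t ht => (hderiv t ⟨le_of_lt (lt_of_le_of_lt hx.1 ht.1),
                le_of_lt (lt_of_lt_of_le ht.2 hyI.2)⟩).hasDerivAt
              (Icc_mem_nhds (lt_of_le_of_lt hx.1 ht.1) (lt_of_lt_of_le ht.2 hyI.2)))
          have hc1 := hc.1
          have hc2 := hc.2
          refine ⟨c, ⟨le_trans hx.1 hc1.le, le_trans hc2.le hyI.2⟩, ?_, ?_⟩
          · have h4 : |a| = y - x := by
              rw [ha, abs_of_nonneg (by linarith)]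
            rw [h4, abs_le]
            constructor <;> linarith
          · have hne' : y - x ≠ 0 := by intro h; apply hne; linarith
            rw [eq_div_iff hne'] at hs
            rw [ha]
            linear_combination -hs
      obtain ⟨c, hcI, hcx, hgc⟩ := hmvt
      have hΔ : g y - g x - g' x * a = (g' c - g' x) * a := by rw [hgc]; ring
      rw [hΔ, abs_mul]
      have hmod : |g' c - g' x| ≤ (1 + |a|/δ) * ω := by
        have hpt := modCont_pointwise_le g' hg' hδ hcI hx
        rw [← hωdef] at hpt
        refine le_trans hpt ?_
        apply mul_le_mul_of_nonneg_right _ hω0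
        have h6 : |c - x| / δ ≤ |a| / δ := (div_le_div_iff_of_pos_right hδ).mpr hcx
        linarith
      have hstep : |g' c - g' x| * |a| ≤ (1 + |a|/δ) * ω * |a| :=
        mul_le_mul_of_nonneg_right hmod (abs_nonneg a)
      have h7 : 2*δ*|a| ≤ δ^2 + a^2 := by nlinarith [sq_nonneg (|a| - δ), sq_abs a]
      have h8 : (1 + |a|/δ)*|a| ≤ δ/2 + 3*a^2/(2*δ) := by
        have hδne : δ ≠ 0 := ne_of_gt hδ
        have e1 : (1 + |a|/δ)*|a| = (2*δ*|a| + 2*|a|^2)/(2*δ) := by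
          field_simp
        have e2 : δ/2 + 3*a^2/(2*δ) = (δ^2 + 3*a^2)/(2*δ) := by field_simp
        rw [e1, e2]
        apply (div_le_div_iff_of_pos_right (by linarith : (0:ℝ) < 2*δ)).mpr
        linarith [h7, sq_abs a]
      have h9 : (1 + |a|/δ) * ω * |a| = ω * ((1 + |a|/δ)*|a|) := by ring
      have h10 : ω * ((1 + |a|/δ)*|a|) ≤ ω * (δ/2 + 3*a^2/(2*δ)) :=
        mul_le_mul_of_nonneg_left h8 hω0
      have h11 : ω * (δ/2 + 3*a^2/(2*δ)) = ω * (δ/2) + 3*ω/(2*δ) * a^2 := by ring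
      linarith [hstep, h9 ▸ h10]
  -- sum up
  rw [key]
  have step1 : |∑ k ∈ Finset.range (n+1),
      (g ((k:ℝ)/(n:ℝ)) - g x - g' x * ((k:ℝ)/(n:ℝ) - x)) * bern n k x|
      ≤ ∑ k ∈ Finset.range (n+1),
        (ω * (δ/2) + (3*ω/(2*δ)) * ((k:ℝ)/(n:ℝ) - x)^2) * bern n k x := by
    refine le_trans (Finset.abs_sum_le_sum_abs _ _) (Finset.sum_le_sum fun k hk => ?_)
    rw [abs_mul, abs_of_nonneg (bern_nonneg hx)]
    exact mul_le_mul_of_nonneg_right (term_bound k hk) (bern_nonneg hx)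
  have step2 : ∑ k ∈ Finset.range (n+1),
        (ω * (δ/2) + (3*ω/(2*δ)) * ((k:ℝ)/(n:ℝ) - x)^2) * bern n k x
      = ω * (δ/2) + (3*ω/(2*δ)) * (x*(1-x)/n) := by
    have hc : ∀ k ∈ Finset.range (n+1),
        (ω * (δ/2) + (3*ω/(2*δ)) * ((k:ℝ)/(n:ℝ) - x)^2) * bern n k x
        = ω * (δ/2) * bern n k x + (3*ω/(2*δ)) * (((k:ℝ)/(n:ℝ) - x)^2 * bern n k x) := by
      intro k _; ring
    rw [Finset.sum_congr rfl hc, Finset.sum_add_distrib, ← Finset.mul_sum, ← Finset.mul_sum,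
      h0, h2, mul_one]
  rw [step2] at step1
  refine le_trans step1 ?_
  have hvar : x*(1-x)/n ≤ δ^2 := by
    rw [hδ2, div_le_div_iff₀ hnR (by positivity : (0:ℝ) < 4*n)]
    linarith [mul_nonneg hnR.le (sq_nonneg (1 - 2*x))]
  have h3w : 0 ≤ 3*ω/(2*δ) := div_nonneg (by linarith) (by linarith)
  have hmul : (3*ω/(2*δ)) * (x*(1-x)/n) ≤ (3*ω/(2*δ)) * δ^2 :=
    mul_le_mul_of_nonneg_left hvar h3w
  have heq2 : (3*ω/(2*δ)) * δ^2 = 3*ω*δ/2 := by field_simp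
  rw [h2δ]
  linarith [hmul, heq2]
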